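/- Let ι be a finite set of feature indices with full feature set N = ι, let g : Finset ι → ℝ be a set function, and let μ(L) = ∑_{S ⊆ L} (-1)^{|L|-|S|} g(S) be its Harsanyi dividends. Then for any two distinct features I, J ∈ ι, the relevance of the conjunction I ∧ J, defined as the sum of Harsanyi dividends over all subsets containing both features, satisfies ∑_{L ⊆ N, I ∈ L and J ∈ L} μ(L) = g(N) − g(N \ {I}) − g(N \ {J}) + g(N \ {I, J}). -/

import Mathlib

open Finset

lemma alt_sum_real {ι : Type*} [DecidableEq ι] (x : Finset ι) :
    ∑ m ∈ x.powerset, (-1 : ℝ) ^ m.card = if x = ∅ then 1 else 0 := by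
  have h := Finset.sum_powerset_neg_one_pow_card (x := x)
  have h2 : ((∑ m ∈ x.powerset, (-1 : ℤ) ^ m.card : ℤ) : ℝ)
      = ((if x = ∅ then (1:ℤ) else 0 : ℤ) : ℝ) := by rw [h]
  push_cast at h2
  simpa using h2

lemma superset_alt_sum {ι : Type*} [Fintype ι] [DecidableEq ι]
    (S A : Finset ι) (hSA : S ⊆ A) :
    ∑ L : Finset ι, (if A ⊆ L then (-1 : ℝ) ^ (L.card - S.card) else 0)
      = if A = univ then (-1 : ℝ) ^ (Fintype.card ι - S.card) else 0 := by
  rw [← Finset.sum_filter]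
  rw [show (univ.filter (fun L => A ⊆ L)) = (univ \ A).powerset.image (fun T => A ∪ T) by
    ext L
    simp only [mem_filter, mem_univ, true_and, mem_image, mem_powerset]
    constructor
    · intro h; exact ⟨L \ A, sdiff_subset_sdiff (subset_univ L) le_rfl, by
        rw [union_sdiff_self_eq_union, union_eq_right.mpr h]⟩
    · rintro ⟨T, hT, rfl⟩; exact subset_union_left]
  rw [Finset.sum_image (by
    intro a ha b hb hab
    rw [mem_coe, mem_powerset] at ha hb
    have h1 : (A ∪ a) \ A = a := union_sdiff_cancel_left ((sdiff_disjoint.mono_left ha).symm)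
    have h2 : (A ∪ b) \ A = b := union_sdiff_cancel_left ((sdiff_disjoint.mono_left hb).symm)
    rw [← h1, ← h2, show A ∪ a = A ∪ b from hab])]
  have key : ∀ T ∈ (univ \ A).powerset,
      (-1 : ℝ) ^ ((A ∪ T).card - S.card)
        = (-1 : ℝ) ^ (A.card - S.card) * (-1 : ℝ) ^ T.card := by
    intro T hT
    rw [mem_powerset] at hT
    have hd : Disjoint A T := (sdiff_disjoint.mono_left hT).symm
    rw [card_union_of_disjoint hd, ← pow_add]
    congr 1
    have := card_le_card hSA
    omega
  rw [Finset.sum_congr rfl key, ← Finset.mul_sum, alt_sum_real]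
  have hiff : (univ \ A = ∅) ↔ A = univ := by
    rw [sdiff_eq_empty_iff_subset]
    exact ⟨fun h => univ_subset_iff.mp h, fun h => h ▸ le_rfl⟩
  by_cases h : A = univ
  · rw [if_pos (hiff.mpr h), if_pos h, mul_one, h, card_univ]
  · rw [if_neg (fun he => h (hiff.mp he)), if_neg h, mul_zero]



/-- The relevance of the conjunction `I ∧ J` (sum of Harsanyi
dividends over all subsets containing both features) equals
`g(N) − g(N \ {I}) − g(N \ {J}) + g(N \ {I, J})`. -/
theorem conjunction_relevance_eq
    {ι : Type*} [Fintype ι] [DecidableEq ι]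
    (g μ : Finset ι → ℝ)
    (hμ : ∀ L : Finset ι,
      μ L = ∑ S ∈ L.powerset, (-1 : ℝ) ^ (L.card - S.card) * g S)
    (I J : ι) (hIJ : I ≠ J) :
    ∑ L ∈ Finset.univ.filter (fun L : Finset ι => I ∈ L ∧ J ∈ L), μ L
      = g Finset.univ - g (Finset.univ \ {I}) - g (Finset.univ \ {J})
        + g (Finset.univ \ {I, J}) := by
  simp only [hμ]
  rw [Finset.sum_filter]
  have step1 : ∀ L : Finset ι,
      (if I ∈ L ∧ J ∈ L then ∑ S ∈ L.powerset, (-1 : ℝ) ^ (L.card - S.card) * g S else 0)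
        = ∑ S : Finset ι,
            (if S ∪ {I, J} ⊆ L then (-1 : ℝ) ^ (L.card - S.card) * g S else 0) := by
    intro L
    by_cases hP : I ∈ L ∧ J ∈ L
    · rw [if_pos hP, ← Finset.sum_filter]
      congr 1
      ext S
      simp [union_subset_iff, insert_subset_iff, hP.1, hP.2]
    · rw [if_neg hP]
      rw [eq_comm]
      apply Finset.sum_eq_zero
      intro S _
      rw [if_neg]
      intro hsub
      exact hP ⟨hsub (by simp), hsub (by simp)⟩
  rw [Finset.sum_congr rfl fun L _ => step1 L, Finset.sum_comm]
  have step2 : ∀ S : Finset ι,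
      (∑ L : Finset ι, if S ∪ {I, J} ⊆ L then (-1 : ℝ) ^ (L.card - S.card) * g S else 0)
        = (if S ∪ {I, J} = univ then (-1 : ℝ) ^ (Fintype.card ι - S.card) else 0) * g S := by
    intro S
    have hsplit : ∀ L : Finset ι,
        (if S ∪ {I, J} ⊆ L then (-1 : ℝ) ^ (L.card - S.card) * g S else 0)
          = (if S ∪ {I, J} ⊆ L then (-1 : ℝ) ^ (L.card - S.card) else 0) * g S :=
      fun L => by split_ifs <;> simp
    rw [Finset.sum_congr rfl fun L _ => hsplit L, ← Finset.sum_mul,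
      superset_alt_sum S (S ∪ {I, J}) subset_union_left]
  rw [Finset.sum_congr rfl fun S _ => step2 S]
  simp only [ite_mul, zero_mul]
  rw [← Finset.sum_filter]
  have himg : (univ.filter (fun S : Finset ι => S ∪ {I, J} = univ))
      = ({I, J} : Finset ι).powerset.image (fun B => univ \ B) := by
    ext S
    simp only [mem_filter, mem_univ, true_and, mem_image, mem_powerset]
    constructor
    · intro h
      refine ⟨{I, J} \ S, sdiff_subset, ?_⟩
      ext x
      have hx : x ∈ S ∨ x ∈ ({I, J} : Finset ι) := by
        rw [← mem_union, h]; exact mem_univ x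
      simp only [mem_sdiff, mem_univ, true_and]
      tauto
    · rintro ⟨B, hB, rfl⟩
      ext x
      simp only [mem_union, mem_sdiff, mem_univ, true_and, iff_true]
      by_cases hxB : x ∈ B
      · exact Or.inr (hB hxB)
      · exact Or.inl hxB
  rw [himg, Finset.sum_image (by
    intro a _ b _ hab
    have ha : a = univ \ (univ \ a) := by simp
    have hb : b = univ \ (univ \ b) := by simp
    rw [ha, hb, show univ \ a = univ \ b from hab])]
  have hcard : ∀ B : Finset ι, B ⊆ ({I, J} : Finset ι) →
      (-1 : ℝ) ^ (Fintype.card ι - (univ \ B).card) * g (univ \ B)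
        = (-1 : ℝ) ^ B.card * g (univ \ B) := by
    intro B hB
    congr 2
    rw [card_sdiff, inter_univ, card_univ]
    exact Nat.sub_sub_self (B.card_le_univ)
  rw [Finset.sum_congr rfl fun B hB => hcard B (mem_powerset.mp hB)]
  have hIJ' : I ∉ ({J} : Finset ι) := by simp [hIJ]
  rw [show ({I, J} : Finset ι) = insert I {J} from rfl,
    Finset.sum_powerset_insert hIJ',
    show ({J} : Finset ι).powerset = {∅, {J}} by ext x; simp [Finset.subset_singleton_iff]]
  have hne : (∅ : Finset ι) ∉ ({{J}} : Finset (Finset ι)) := by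
    simp only [Finset.mem_singleton]
    exact fun h => (Finset.singleton_ne_empty J) h.symm
  rw [Finset.sum_insert hne, Finset.sum_singleton,
    Finset.sum_insert hne, Finset.sum_singleton]
  simp only [card_empty, card_singleton, sdiff_empty, pow_zero, pow_one, one_mul,
    LawfulSingleton.insert_empty_eq, card_insert_of_notMem hIJ', neg_one_mul, neg_neg]
  have h2 : ((-1 : ℝ)) ^ (2 : ℕ) = 1 := by norm_num
  rw [h2, one_mul]
  ring
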